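/- For every n >= 1, sum_{p=0}^{n-1} ((-1)^p/(n-p)) * binomial(n-p, p) * binomial(3n-2p, n-p-1) = (1/(n+1)) * binomial(2n, n). -/

import Mathlib

open Nat Finset
set_option maxHeartbeats 1600000

private def F9 (n p : ℕ) : ℚ :=
  ((-1) ^ p / ((n - p : ℕ) : ℚ)) * ((n - p).choose p : ℚ) *
    ((3 * n - 2 * p).choose (n - p - 1) : ℚ)

private def G9 (n p : ℕ) : ℚ :=
  (-(p : ℚ) * (2 * (p:ℚ)^2 - (6 * (n:ℚ)^2 + 23 * n + 19) * p
      + (11 * (n:ℚ)^3 + 50 * (n:ℚ)^2 + 72 * n + 33)) /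
    ((2 * (n:ℚ) + 3) * ((n:ℚ) + 1) * (3 * (n:ℚ) + 3 - 2 * (p:ℚ)))) * F9 (n+1) p

private lemma fact_cast_succ (a : ℕ) : (((a+1)! : ℕ) : ℚ) = ((a:ℚ)+1) * ((a ! : ℕ) : ℚ) := by
  rw [Nat.factorial_succ]; push_cast; ring

private lemma F9_zero (n p : ℕ) (h : n - p < p) : F9 n p = 0 := by
  rw [F9, Nat.choose_eq_zero_of_lt h]; simp

-- the common E value for cases B and C
private lemma hEB (t : ℕ) :
    F9 (2*t+2) (t+1)
      = (-1)^(t+1) * (((4*t+4)! : ℕ) : ℚ) / (((t:ℚ)+1) * ((t ! : ℕ) : ℚ) * (((3*t+4)! : ℕ) : ℚ)) := by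
  rw [F9, show 2*t+2 - (t+1) = t+1 from by omega,
      show 3*(2*t+2) - 2*(t+1) = 4*t+4 from by omega,
      show t+1-1 = t from by omega,
      Nat.choose_self,
      Nat.cast_choose ℚ (show t ≤ 4*t+4 by omega),
      show 4*t+4 - t = 3*t+4 from by omega]
  have h1 : ((t ! : ℕ) : ℚ) ≠ 0 := by exact_mod_cast t.factorial_ne_zero
  have h2 : (((3*t+4)! : ℕ) : ℚ) ≠ 0 := by exact_mod_cast (3*t+4).factorial_ne_zero
  have c1 : ((t:ℚ)+1) ≠ 0 := by positivity
  push_cast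
  field_simp

private lemma hFB (t : ℕ) :
    F9 (2*t+2+1) (t+1)
      = ((-1)^(t+1) * (((4*t+4)! : ℕ) : ℚ) / (((t:ℚ)+1) * ((t ! : ℕ) : ℚ) * (((3*t+4)! : ℕ) : ℚ)))
        * ((4*(t:ℚ)+7)*(4*(t:ℚ)+6)*(4*(t:ℚ)+5)) / ((3*(t:ℚ)+6)*(3*(t:ℚ)+5)) := by
  have h1 : ((t ! : ℕ) : ℚ) ≠ 0 := by exact_mod_cast t.factorial_ne_zero
  have h2 : (((3*t+4)! : ℕ) : ℚ) ≠ 0 := by exact_mod_cast (3*t+4).factorial_ne_zero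
  have c1 : ((t:ℚ)+1) ≠ 0 := by positivity
  have c2 : ((t:ℚ)+2) ≠ 0 := by positivity
  have c3 : (3*(t:ℚ)+5) ≠ 0 := by positivity
  have c4 : (3*(t:ℚ)+6) ≠ 0 := by positivity
  rw [F9, show 2*t+2+1 - (t+1) = t+2 from by omega,
      show 3*(2*t+2+1) - 2*(t+1) = 4*t+7 from by omega,
      show t+2-1 = t+1 from by omega,
      Nat.cast_choose ℚ (show t+1 ≤ t+2 by omega),
      Nat.cast_choose ℚ (show t+1 ≤ 4*t+7 by omega),
      show t+2 - (t+1) = 1 from by omega,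
      show 4*t+7 - (t+1) = 3*t+6 from by omega,
      show (4*t+7) = (4*t+6)+1 from rfl, fact_cast_succ (4*t+6),
      show (4*t+6) = (4*t+5)+1 from rfl, fact_cast_succ (4*t+5),
      show (4*t+5) = (4*t+4)+1 from rfl, fact_cast_succ (4*t+4),
      show (3*t+6) = (3*t+5)+1 from rfl, fact_cast_succ (3*t+5),
      show (3*t+5) = (3*t+4)+1 from rfl, fact_cast_succ (3*t+4),
      show (t+2) = (t+1)+1 from rfl, fact_cast_succ (t+1), fact_cast_succ t]
  push_cast [Nat.factorial_one]
  field_simp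
  ring

private lemma keyB (t : ℕ) :
    (((2*t+2 : ℕ) : ℚ) + 2) * F9 (2*t+2+1) (t+1)
      - 2 * (2 * ((2*t+2 : ℕ) : ℚ) + 1) * F9 (2*t+2) (t+1)
    = G9 (2*t+2) (t+1+1) - G9 (2*t+2) (t+1) := by
  have hC : F9 (2*t+2+1) (t+1+1) = 0 := F9_zero _ _ (by omega)
  rw [G9, G9, hEB t, hFB t, hC]
  have h1 : ((t ! : ℕ) : ℚ) ≠ 0 := by exact_mod_cast t.factorial_ne_zero
  have h2 : (((3*t+4)! : ℕ) : ℚ) ≠ 0 := by exact_mod_cast (3*t+4).factorial_ne_zero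
  have c1 : ((t:ℚ)+1) ≠ 0 := by positivity
  have c3 : (3*(t:ℚ)+5) ≠ 0 := by positivity
  have c4 : (3*(t:ℚ)+6) ≠ 0 := by positivity
  push_cast
  have c8 : (2*(2*(t:ℚ)+2)+3) ≠ 0 := by positivity
  have c9 : ((2*(t:ℚ)+2)+1) ≠ 0 := by positivity
  have c10 : (3*(2*(t:ℚ)+2)+3-2*((t:ℚ)+1)) ≠ 0 := by
    have h : (3*(2*(t:ℚ)+2)+3-2*((t:ℚ)+1)) = 4*(t:ℚ)+7 := by ring
    rw [h]; positivity
  rw [show (3*(2*(t:ℚ)+2)+3-2*((t:ℚ)+1)) = 4*(t:ℚ)+7 from by ring]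
  field_simp
  ring

private lemma keyC (t : ℕ) :
    (((2*t+1 : ℕ) : ℚ) + 2) * F9 (2*t+1+1) (t+1)
      - 2 * (2 * ((2*t+1 : ℕ) : ℚ) + 1) * F9 (2*t+1) (t+1)
    = G9 (2*t+1) (t+1+1) - G9 (2*t+1) (t+1) := by
  have hZ1 : F9 (2*t+1) (t+1) = 0 := F9_zero _ _ (by omega)
  have hZ2 : F9 (2*t+1+1) (t+1+1) = 0 := F9_zero _ _ (by omega)
  have hA : F9 (2*t+1+1) (t+1)
      = (-1)^(t+1) * (((4*t+4)! : ℕ) : ℚ) / (((t:ℚ)+1) * ((t ! : ℕ) : ℚ) * (((3*t+4)! : ℕ) : ℚ)) := by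
    have := hEB t; rwa [show 2*t+2 = 2*t+1+1 from rfl] at this
  rw [G9, G9, hZ1, hZ2, hA]
  have h1 : ((t ! : ℕ) : ℚ) ≠ 0 := by exact_mod_cast t.factorial_ne_zero
  have h2 : (((3*t+4)! : ℕ) : ℚ) ≠ 0 := by exact_mod_cast (3*t+4).factorial_ne_zero
  have c1 : ((t:ℚ)+1) ≠ 0 := by positivity
  push_cast
  have c8 : (2*(2*(t:ℚ)+1)+3) ≠ 0 := by positivity
  have c9 : ((2*(t:ℚ)+1)+1) ≠ 0 := by positivity
  have c10 : (3*(2*(t:ℚ)+1)+3-2*((t:ℚ)+1)) ≠ 0 := by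
    have h : (3*(2*(t:ℚ)+1)+3-2*((t:ℚ)+1)) = 4*(t:ℚ)+4 := by ring
    rw [h]; positivity
  rw [show (3*(2*(t:ℚ)+1)+3-2*((t:ℚ)+1)) = 4*(t:ℚ)+4 from by ring]
  field_simp
  ring

private lemma keyD (n p : ℕ) (h : n + 2 ≤ 2*p) (hp : p ≤ n) :
    ((n : ℚ) + 2) * F9 (n+1) p - 2 * (2 * (n : ℚ) + 1) * F9 n p
    = G9 n (p+1) - G9 n p := by
  have z1 : F9 n p = 0 := F9_zero _ _ (by omega)
  have z2 : F9 (n+1) p = 0 := F9_zero _ _ (by omega)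
  have z3 : F9 (n+1) (p+1) = 0 := F9_zero _ _ (by omega)
  rw [G9, G9, z1, z2, z3]
  ring

private lemma keyA' (p m : ℕ) (E : ℚ)
    (hfnp : F9 (2*p+1+m) p = E / ((m:ℚ)+1))
    (hfn1p : F9 (2*p+1+m+1) p
      = E * ((4*(p:ℚ)+3*m+6)*(4*(p:ℚ)+3*m+5)*(4*(p:ℚ)+3*m+4))
          / (((m:ℚ)+2)*((m:ℚ)+1)*(3*(p:ℚ)+2*m+5)*(3*(p:ℚ)+2*m+4)))
    (hfn1p1 : F9 (2*p+1+m+1) (p+1)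
      = -E * (4*(p:ℚ)+3*m+4) / (((p:ℚ)+1)*(3*(p:ℚ)+2*m+4))) :
    (((2*p+1+m : ℕ) : ℚ) + 2) * F9 (2*p+1+m+1) p
      - 2 * (2 * ((2*p+1+m : ℕ) : ℚ) + 1) * F9 (2*p+1+m) p
    = G9 (2*p+1+m) (p+1) - G9 (2*p+1+m) p := by
  rw [G9, G9, hfnp, hfn1p, hfn1p1]
  have c1 : ((m:ℚ)+1) ≠ 0 := by positivity
  have c2 : ((m:ℚ)+2) ≠ 0 := by positivity
  have c3 : ((p:ℚ)+1) ≠ 0 := by positivity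
  have c4 : (3*(p:ℚ)+2*m+4) ≠ 0 := by positivity
  have c5 : (3*(p:ℚ)+2*m+5) ≠ 0 := by positivity
  push_cast
  have c8 : (2*(2*(p:ℚ)+1+m)+3) ≠ 0 := by positivity
  have c9 : ((2*(p:ℚ)+1+m)+1) ≠ 0 := by positivity
  have c10 : (3*(2*(p:ℚ)+1+m)+3-2*((p:ℚ)+1)) ≠ 0 := by
    have h : (3*(2*(p:ℚ)+1+m)+3-2*((p:ℚ)+1)) = 4*(p:ℚ)+3*m+4 := by ring
    rw [h]; positivity
  have c11 : (3*(2*(p:ℚ)+1+m)+3-2*(p:ℚ)) ≠ 0 := by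
    have h : (3*(2*(p:ℚ)+1+m)+3-2*(p:ℚ)) = 4*(p:ℚ)+3*m+6 := by ring
    rw [h]; positivity
  rw [show (3*(2*(p:ℚ)+1+m)+3-2*((p:ℚ)+1)) = 4*(p:ℚ)+3*m+4 from by ring,
    show (3*(2*(p:ℚ)+1+m)+3-2*(p:ℚ)) = 4*(p:ℚ)+3*m+6 from by ring]
  field_simp
  ring

private lemma keyA (p m : ℕ) :
    (((2*p+1+m : ℕ) : ℚ) + 2) * F9 (2*p+1+m+1) p
      - 2 * (2 * ((2*p+1+m : ℕ) : ℚ) + 1) * F9 (2*p+1+m) p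
    = G9 (2*p+1+m) (p+1) - G9 (2*p+1+m) p := by
  have h1 : ((p ! : ℕ) : ℚ) ≠ 0 := by exact_mod_cast p.factorial_ne_zero
  have h2 : ((m ! : ℕ) : ℚ) ≠ 0 := by exact_mod_cast m.factorial_ne_zero
  have h3 : (((p+m)! : ℕ) : ℚ) ≠ 0 := by exact_mod_cast (p+m).factorial_ne_zero
  have h4 : (((3*p+2*m+3)! : ℕ) : ℚ) ≠ 0 := by exact_mod_cast (3*p+2*m+3).factorial_ne_zero
  have c1 : ((p:ℚ)+m+1) ≠ 0 := by positivity
  have c2 : ((p:ℚ)+m+2) ≠ 0 := by positivity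
  have c3 : ((m:ℚ)+1) ≠ 0 := by positivity
  have c4 : ((m:ℚ)+2) ≠ 0 := by positivity
  have c5 : ((p:ℚ)+1) ≠ 0 := by positivity
  have c6 : (3*(p:ℚ)+2*m+4) ≠ 0 := by positivity
  have c7 : (3*(p:ℚ)+2*m+5) ≠ 0 := by positivity
  apply keyA' p m
    ((-1)^p * (((4*p+3*m+3)! : ℕ) : ℚ) / (((p ! : ℕ) : ℚ) * ((m ! : ℕ) : ℚ) * (((3*p+2*m+3)! : ℕ) : ℚ)))
  · rw [F9, show 2*p+1+m - p = p+m+1 from by omega,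
        show 3*(2*p+1+m) - 2*p = 4*p+3*m+3 from by omega,
        show p+m+1-1 = p+m from by omega,
        Nat.cast_choose ℚ (show p ≤ p+m+1 by omega),
        Nat.cast_choose ℚ (show p+m ≤ 4*p+3*m+3 by omega),
        show p+m+1 - p = m+1 from by omega,
        show 4*p+3*m+3 - (p+m) = 3*p+2*m+3 from by omega,
        fact_cast_succ (p+m), fact_cast_succ m]
    push_cast
    field_simp
  · rw [F9, show 2*p+1+m+1 - p = p+m+2 from by omega,
        show 3*(2*p+1+m+1) - 2*p = 4*p+3*m+6 from by omega,
        show p+m+2-1 = p+m+1 from by omega,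
        Nat.cast_choose ℚ (show p ≤ p+m+2 by omega),
        Nat.cast_choose ℚ (show p+m+1 ≤ 4*p+3*m+6 by omega),
        show p+m+2 - p = m+2 from by omega,
        show 4*p+3*m+6 - (p+m+1) = 3*p+2*m+5 from by omega,
        show (4*p+3*m+6) = (4*p+3*m+5)+1 from rfl, fact_cast_succ (4*p+3*m+5),
        show (4*p+3*m+5) = (4*p+3*m+4)+1 from rfl, fact_cast_succ (4*p+3*m+4),
        show (4*p+3*m+4) = (4*p+3*m+3)+1 from rfl, fact_cast_succ (4*p+3*m+3),
        show (3*p+2*m+5) = (3*p+2*m+4)+1 from rfl, fact_cast_succ (3*p+2*m+4),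
        show (3*p+2*m+4) = (3*p+2*m+3)+1 from rfl, fact_cast_succ (3*p+2*m+3),
        fact_cast_succ (p+m+1), fact_cast_succ (p+m),
        show (m+2) = (m+1)+1 from rfl, fact_cast_succ (m+1), fact_cast_succ m]
    push_cast
    field_simp
    ring
  · rw [F9, show 2*p+1+m+1 - (p+1) = p+m+1 from by omega,
        show 3*(2*p+1+m+1) - 2*(p+1) = 4*p+3*m+4 from by omega,
        show p+m+1-1 = p+m from by omega,
        Nat.cast_choose ℚ (show p+1 ≤ p+m+1 by omega),
        Nat.cast_choose ℚ (show p+m ≤ 4*p+3*m+4 by omega),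
        show p+m+1 - (p+1) = m from by omega,
        show 4*p+3*m+4 - (p+m) = 3*p+2*m+4 from by omega,
        show (4*p+3*m+4) = (4*p+3*m+3)+1 from rfl, fact_cast_succ (4*p+3*m+3),
        show (3*p+2*m+4) = (3*p+2*m+3)+1 from rfl, fact_cast_succ (3*p+2*m+3),
        fact_cast_succ (p+m), Nat.factorial_succ p, pow_succ]
    push_cast
    field_simp
    ring


private lemma key9 (n p : ℕ) (hn : 1 ≤ n) (hp : p ≤ n) :
    ((n : ℚ) + 2) * F9 (n+1) p - 2 * (2 * (n : ℚ) + 1) * F9 n p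
    = G9 n (p+1) - G9 n p := by
  rcases le_or_gt (2*p+1) n with h | h
  · obtain ⟨m, rfl⟩ : ∃ m, n = 2*p+1+m := ⟨n - (2*p+1), by omega⟩
    exact keyA p m
  · rcases (show n = 2*p ∨ n+1 = 2*p ∨ n+2 ≤ 2*p from by omega) with h2 | h2 | h2
    · obtain ⟨t, rfl⟩ : ∃ t, p = t+1 := ⟨p-1, by omega⟩
      obtain rfl : n = 2*t+2 := by omega
      exact keyB t
    · obtain ⟨t, rfl⟩ : ∃ t, p = t+1 := ⟨p-1, by omega⟩
      obtain rfl : n = 2*t+1 := by omega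
      exact keyC t
    · exact keyD n p h2 hp

private lemma rec9 (n : ℕ) (hn : 1 ≤ n) :
    ((n:ℚ)+2) * ∑ p ∈ range (n+1), F9 (n+1) p
      = 2*(2*(n:ℚ)+1) * ∑ p ∈ range n, F9 n p := by
  have tele : ∑ p ∈ range (n+1), (G9 n (p+1) - G9 n p) = G9 n (n+1) - G9 n 0 :=
    Finset.sum_range_sub (fun p => G9 n p) (n+1)
  have hsum : ∑ p ∈ range (n+1), (((n:ℚ)+2) * F9 (n+1) p - 2*(2*(n:ℚ)+1) * F9 n p)
      = G9 n (n+1) - G9 n 0 := by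
    rw [← tele]
    exact Finset.sum_congr rfl fun p hp =>
      key9 n p hn (Nat.lt_succ_iff.mp (Finset.mem_range.mp hp))
  rw [Finset.sum_sub_distrib, ← Finset.mul_sum, ← Finset.mul_sum] at hsum
  have h0 : G9 n 0 = 0 := by simp [G9]
  have h1 : G9 n (n+1) = 0 := by
    rw [G9, F9_zero (n+1) (n+1) (by omega)]; ring
  have h2 : ∑ p ∈ range (n+1), F9 n p = ∑ p ∈ range n, F9 n p := by
    rw [Finset.sum_range_succ, F9_zero n n (by omega), add_zero]
  rw [h0, h1, h2] at hsum
  linarith [hsum]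

private lemma main9 : ∀ n : ℕ, 1 ≤ n →
    ((n:ℚ)+1) * (∑ p ∈ range n, F9 n p) = ((2*n).choose n : ℚ) := by
  refine Nat.le_induction ?_ ?_
  · simp [F9]
    norm_num
  · intro n hn ih
    have hrec := rec9 n hn
    have hcb := Nat.succ_mul_centralBinom_succ n
    have hcbq : ((n:ℚ)+1) * ((n+1).centralBinom : ℚ)
        = 2*(2*(n:ℚ)+1) * (n.centralBinom : ℚ) := by exact_mod_cast hcb
    have e1 : ((2*n).choose n : ℚ) = (n.centralBinom : ℚ) := by rw [Nat.centralBinom]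
    have e2 : ((2*(n+1)).choose (n+1) : ℚ) = ((n+1).centralBinom : ℚ) := by
      rw [Nat.centralBinom]
    rw [e1] at ih
    rw [e2]
    push_cast
    have c2 : ((n:ℚ)+1) ≠ 0 := by positivity
    apply mul_left_cancel₀ c2
    linear_combination ((n:ℚ)+1) * hrec + 2*(2*(n:ℚ)+1) * ih - hcbq

/-- for `n ≥ 1`,
`∑_{p=0}^{n-1} ((-1)^p/(n-p)) C(n-p, p) C(3n-2p, n-p-1) = (1/(n+1)) C(2n, n)`. -/
theorem alternating_sum_eq_catalan (n : ℕ) (hn : 1 ≤ n) :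
    (∑ p ∈ Finset.range n,
        ((-1) ^ p / ((n - p : ℕ) : ℚ)) * ((n - p).choose p : ℚ) *
          ((3 * n - 2 * p).choose (n - p - 1) : ℚ)) =
      (1 / (n + 1)) * ((2 * n).choose n : ℚ) := by
  have h := main9 n hn
  have c2 : ((n:ℚ)+1) ≠ 0 := by positivity
  have h2 : (∑ p ∈ range n, F9 n p) = (1/((n:ℚ)+1)) * ((2*n).choose n : ℚ) := by
    rw [one_div, ← h, inv_mul_cancel_left₀ c2]
  simpa only [F9] using h2
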